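/- arXiv:2103.12825 — 3 statements merged into one kernel-verified Lean document; each statement's English description precedes it below -/
import Mathlib

section
/- Let Λ ⊆ ℝⁿ be a bounded measurable set, V ∈ L¹(Λ), and (J_d)_{d∈ℕ} a sequence in L¹(Λ) with J_d(x) ≤ V(x) for all x ∈ Λ and ‖V − J_d‖_{L¹(Λ)} → 0 as d → ∞. Then for every γ ∈ ℝ, μ({x ∈ Λ : V(x) ≤ γ} Δ {x ∈ Λ : J_d(x) ≤ γ}) → 0 as d → ∞. -/
open MeasureTheory Set Filter

/-- If `J_d ≤ V` on `Λ` and `‖V - J_d‖_{L¹(Λ)} → 0`, then the measure of the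
symmetric difference of the closed sublevel sets `{V ≤ γ}` and `{J_d ≤ γ}`
(within `Λ`) tends to zero. -/
theorem sublevel_convergence_from_below (n : ℕ) (Λ : Set (EuclideanSpace ℝ (Fin n)))
    (hΛb : Bornology.IsBounded Λ) (hΛm : MeasurableSet Λ)
    (V : EuclideanSpace ℝ (Fin n) → ℝ) (J : ℕ → EuclideanSpace ℝ (Fin n) → ℝ)
    (hV : IntegrableOn V Λ) (hJ : ∀ d, IntegrableOn (J d) Λ)
    (hle : ∀ d, ∀ x ∈ Λ, J d x ≤ V x)
    (hconv : Tendsto (fun d => ∫ x in Λ, |V x - J d x|) atTop (nhds 0)) :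
    ∀ γ : ℝ,
      Tendsto (fun d =>
        volume (({x ∈ Λ | V x ≤ γ} \ {x ∈ Λ | J d x ≤ γ}) ∪
                ({x ∈ Λ | J d x ≤ γ} \ {x ∈ Λ | V x ≤ γ})))
        atTop (nhds 0) := by
  intro γ
  set μ : Measure (EuclideanSpace ℝ (Fin n)) := volume.restrict Λ with hμ
  have hΛfin : volume Λ ≠ ⊤ := hΛb.measure_lt_top.ne
  have hμfin : IsFiniteMeasure μ := by
    constructor
    rw [hμ, Measure.restrict_apply_univ]
    exact hΛfin.lt_top
  -- a measurable version of V
  obtain ⟨V', hV'meas, hVV'⟩ := hV.aemeasurable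
  -- the "band" sets
  set B : ℕ → Set (EuclideanSpace ℝ (Fin n)) :=
    fun k => {x | γ < V' x ∧ V' x ≤ γ + 1 / (k + 1)} with hB
  have hBmeas : ∀ k, MeasurableSet (B k) := by
    intro k
    exact (measurableSet_lt measurable_const hV'meas).inter
      (measurableSet_le hV'meas measurable_const)
  have hBanti : Antitone B := by
    intro k l hkl x hx
    have h1k : (1:ℝ) / ((l:ℝ) + 1) ≤ 1 / ((k:ℝ) + 1) :=
      one_div_le_one_div_of_le (by positivity) (by exact_mod_cast Nat.add_le_add_right hkl 1)
    exact ⟨hx.1, hx.2.trans (by linarith)⟩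
  have hBempty : (⋂ k, B k) = ∅ := by
    ext x
    simp only [mem_iInter, mem_empty_iff_false, iff_false]
    intro h
    obtain ⟨k, hk⟩ := exists_nat_one_div_lt (sub_pos.mpr (h 0).1)
    exact absurd ((h k).2) (by linarith)
  have hBto : Tendsto (fun k => μ (B k)) atTop (nhds 0) := by
    have := tendsto_measure_iInter_atTop (μ := μ)
      (fun k => (hBmeas k).nullMeasurableSet) hBanti ⟨0, measure_ne_top μ _⟩
    rw [hBempty] at this
    simpa [Function.comp_def] using this
  rw [ENNReal.tendsto_atTop_zero]
  intro ε hε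
  rcases eq_top_or_lt_top ε with hεtop | hεlt
  · exact ⟨0, fun d _ => hεtop ▸ le_top⟩
  have hε2 : (0 : ENNReal) < ε / 2 := ENNReal.div_pos hε.ne' (by norm_num)
  -- choose k with μ (B k) ≤ ε/2
  obtain ⟨k, hk⟩ := (hBto.eventually_le_const hε2).exists
  -- choose N from the L¹ convergence
  have hδpos : (0 : ℝ) < (ε / 2).toReal / (k + 1) := by
    apply div_pos
    · exact ENNReal.toReal_pos hε2.ne' (by
        exact (ENNReal.div_lt_top hεlt.ne (by norm_num)).ne)
    · positivity
  have hev : ∀ᶠ d in atTop, ∫ x in Λ, |V x - J d x| < (ε / 2).toReal / (k + 1) := by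
    filter_upwards [Metric.tendsto_nhds.mp hconv _ hδpos] with d hd
    rw [Real.dist_eq, sub_zero] at hd
    exact lt_of_le_of_lt (le_abs_self _) hd
  obtain ⟨N, hN⟩ := hev.exists_forall_of_atTop
  refine ⟨N, fun d hd => ?_⟩
  -- the symmetric difference set
  set S : Set (EuclideanSpace ℝ (Fin n)) :=
    ({x ∈ Λ | V x ≤ γ} \ {x ∈ Λ | J d x ≤ γ}) ∪
      ({x ∈ Λ | J d x ≤ γ} \ {x ∈ Λ | V x ≤ γ}) with hS
  -- Markov set
  set D : Set (EuclideanSpace ℝ (Fin n)) :=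
    {x | 1 / ((k : ℝ) + 1) ≤ |V x - J d x|} with hD
  -- inclusion S ⊆ D ∪ (B k ∪ {V ≠ V'})
  have hsub : S ⊆ D ∪ (B k ∪ {x | V x ≠ V' x}) := by
    intro x hx
    rcases hx with hx | hx
    · exact absurd (hle d x hx.1.1) (by
        have h1 := hx.1.2
        have h2 : ¬ (x ∈ Λ ∧ J d x ≤ γ) := hx.2
        push_neg at h2
        exact not_le.mpr (lt_of_le_of_lt h1 (h2 hx.1.1)))
    · obtain ⟨⟨hxΛ, hJx⟩, hnot⟩ := hx
      have hVx : γ < V x := by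
        by_contra h
        exact hnot ⟨hxΛ, not_lt.mp h⟩
      by_cases hcase : V x ≤ γ + 1 / (k + 1)
      · by_cases heq : V x = V' x
        · exact Or.inr (Or.inl ⟨heq ▸ hVx, heq ▸ hcase⟩)
        · exact Or.inr (Or.inr heq)
      · left
        push_neg at hcase
        have : 1 / ((k : ℝ) + 1) ≤ V x - J d x := by linarith
        exact this.trans (le_abs_self _)
  have hSΛ : S ⊆ Λ := by
    intro x hx
    rcases hx with hx | hx
    · exact hx.1.1
    · exact hx.1.1
  -- volume S = μ S
  have hvol : volume S = μ S := by
    rw [hμ, Measure.restrict_apply' hΛm, inter_eq_self_of_subset_left hSΛ]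
  -- null set
  have hnull : μ {x | V x ≠ V' x} = 0 := hVV'
  -- Markov bound
  have hMarkov : μ D ≤ ε / 2 := by
    have hεk : (0:ℝ) < 1 / ((k : ℝ) + 1) := by positivity
    have hmk := mul_meas_ge_le_integral_of_nonneg (μ := μ)
      (f := fun x => |V x - J d x|)
      (Filter.Eventually.of_forall fun x => abs_nonneg _)
      ((hV.sub (hJ d)).abs) (1 / ((k : ℝ) + 1))
    have hint : ∫ x, |V x - J d x| ∂μ < (ε / 2).toReal / (k + 1) := hN d hd
    have hfin : μ D ≠ ⊤ := measure_ne_top μ _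
    have htR : (μ D).toReal ≤ (ε / 2).toReal := by
      have h1 : (1 / ((k : ℝ) + 1)) * (μ D).toReal < (ε / 2).toReal / (k + 1) :=
        lt_of_le_of_lt hmk hint
      have hkpos : (0:ℝ) < (k:ℝ) + 1 := by positivity
      have h3 : (μ D).toReal / ((k:ℝ) + 1) < (ε / 2).toReal / ((k:ℝ) + 1) := by
        have heq : 1 * (1 / ((k:ℝ) + 1)) * (μ D).toReal = (μ D).toReal / ((k:ℝ) + 1) := by
          ring
        linarith [h1, heq]
      exact (div_lt_div_iff_of_pos_right hkpos).mp h3 |>.le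
    calc μ D = ENNReal.ofReal (μ D).toReal := (ENNReal.ofReal_toReal hfin).symm
      _ ≤ ENNReal.ofReal (ε / 2).toReal := ENNReal.ofReal_le_ofReal htR
      _ = ε / 2 := ENNReal.ofReal_toReal
          (ENNReal.div_lt_top hεlt.ne (by norm_num)).ne
  calc volume S = μ S := hvol
    _ ≤ μ (D ∪ (B k ∪ {x | V x ≠ V' x})) := measure_mono hsub
    _ ≤ μ D + μ (B k ∪ {x | V x ≠ V' x}) := measure_union_le _ _
    _ ≤ μ D + (μ (B k) + μ {x | V x ≠ V' x}) := by gcongr; exact measure_union_le _ _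
    _ = μ D + μ (B k) := by rw [hnull, add_zero]
    _ ≤ ε / 2 + ε / 2 := add_le_add hMarkov hk
    _ = ε := ENNReal.add_halves ε
end

section
/- Let φ be a flow as above and suppose there exist R, η, μ, δ > 0 such that ‖φ(x,t)‖ ≤ R for all x ∈ ROA and t ≥ 0, and ‖φ(z,t)‖ ≤ μ e^{−δt}‖z‖ whenever ‖z‖ ≤ η. Fix β ∈ ℕ, β ≥ 1, and define V(x) := ∫₀^∞ ‖φ(x,t)‖^{2β} dt for x ∈ ROA. Then for every x ∈ ROA, V(x) < ∞; specifically V(x) ≤ F_η(x)·R^{2β} + μ^{2β}η^{2β}/(2δβ), where F_η(x) := inf{t ≥ 0 : ‖φ(x,t)‖ < η} is finite. -/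
open Filter MeasureTheory Set

lemma aux_integral_exp_neg_mul_Ioi {a : ℝ} (ha : 0 < a) (T : ℝ) :
    ∫ t in Ioi T, Real.exp (-a * t) = a⁻¹ * Real.exp (-(a * T)) := by
  have h := integral_comp_mul_left_Ioi (fun u => Real.exp (-u)) T ha
  simp only [smul_eq_mul] at h
  rw [integral_exp_neg_Ioi] at h
  simpa only [neg_mul] using h

/-- Finiteness of the converse Lyapunov integral `V(x) = ∫₀^∞ ‖φ(x,t)‖^{2β} dt` on the
region of attraction, with the explicit bound `V(x) ≤ F_η(x)·R^{2β} + μ^{2β}η^{2β}/(2δβ)`. -/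
theorem converse_lyapunov_finite (n : ℕ)
    (φ : EuclideanSpace ℝ (Fin n) → ℝ → EuclideanSpace ℝ (Fin n))
    (hsemi : ∀ x : EuclideanSpace ℝ (Fin n), ∀ t s : ℝ, 0 ≤ t → 0 ≤ s →
      φ (φ x t) s = φ x (t + s))
    (hzero : ∀ x : EuclideanSpace ℝ (Fin n), φ x 0 = x)
    (hcont : Continuous (fun p : EuclideanSpace ℝ (Fin n) × ℝ => φ p.1 p.2))
    (ROA : Set (EuclideanSpace ℝ (Fin n)))
    (hROA : ROA = {x | Tendsto (fun t : ℝ => ‖φ x t‖) atTop (nhds 0)})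
    (R η μ δ : ℝ) (hR : 0 < R) (hη : 0 < η) (hμ : 0 < μ) (hδ : 0 < δ)
    (hbound : ∀ x ∈ ROA, ∀ t : ℝ, 0 ≤ t → ‖φ x t‖ ≤ R)
    (hstab : ∀ z : EuclideanSpace ℝ (Fin n), ‖z‖ ≤ η →
      ∀ t : ℝ, 0 ≤ t → ‖φ z t‖ ≤ μ * Real.exp (-δ * t) * ‖z‖)
    (β : ℕ) (hβ : 1 ≤ β)
    (x : EuclideanSpace ℝ (Fin n)) (hx : x ∈ ROA) :
    {t : ℝ | 0 ≤ t ∧ ‖φ x t‖ < η}.Nonempty ∧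
      (∫⁻ t in Ioi (0 : ℝ), ENNReal.ofReal (‖φ x t‖ ^ (2 * β))) ≤
        ENNReal.ofReal (sInf {t : ℝ | 0 ≤ t ∧ ‖φ x t‖ < η} * R ^ (2 * β) +
          μ ^ (2 * β) * η ^ (2 * β) / (2 * δ * β)) := by
  have hxt : Tendsto (fun t : ℝ => ‖φ x t‖) atTop (nhds 0) := by
    rw [hROA] at hx; exact hx
  set g : ℝ → ℝ := fun t => ‖φ x t‖ with hg
  have hgc : Continuous g := by
    exact continuous_norm.comp (hcont.comp (Continuous.prodMk_right x))
  set S : Set ℝ := {t : ℝ | 0 ≤ t ∧ ‖φ x t‖ < η} with hS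
  -- nonemptiness
  have hlt : ∀ᶠ t in atTop, g t < η := hxt.eventually_lt_const hη
  have hne : S.Nonempty := by
    obtain ⟨t, ht1, ht2⟩ := (hlt.and (eventually_ge_atTop (0:ℝ))).exists
    exact ⟨t, ht2, ht1⟩
  refine ⟨hne, ?_⟩
  have hbdd : BddBelow S := ⟨0, fun t ht => ht.1⟩
  set T : ℝ := sInf S with hT
  have hT0 : 0 ≤ T := le_csInf hne fun t ht => ht.1
  -- ‖φ x T‖ ≤ η
  have hgT : g T ≤ η := by
    have hcl : IsClosed {t : ℝ | g t ≤ η} := isClosed_le hgc continuous_const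
    have hsub : S ⊆ {t : ℝ | g t ≤ η} := fun t ht => le_of_lt ht.2
    have : T ∈ closure S := csInf_mem_closure hne hbdd
    exact (hcl.closure_subset_iff.mpr hsub) this
  -- tail estimate
  have htail : ∀ t : ℝ, T ≤ t → g t ≤ μ * Real.exp (-δ * (t - T)) * η := by
    intro t ht
    have h1 := hstab (φ x T) hgT (t - T) (by linarith)
    rw [hsemi x T (t - T) hT0 (by linarith), add_sub_cancel] at h1
    refine h1.trans ?_
    have : (0:ℝ) ≤ μ * Real.exp (-δ * (t - T)) :=
      mul_nonneg hμ.le (Real.exp_pos _).le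
    exact mul_le_mul_of_nonneg_left hgT this
  have hmeas : Measurable fun t : ℝ => ENNReal.ofReal (g t ^ (2 * β)) :=
    (hgc.measurable.pow_const _).ennreal_ofReal
  -- split
  have hsplit : Ioi (0:ℝ) = Ioc 0 T ∪ Ioi T := (Ioc_union_Ioi_eq_Ioi hT0).symm
  have hdisj : Disjoint (Ioc (0:ℝ) T) (Ioi T) := Ioc_disjoint_Ioi le_rfl
  rw [hsplit, lintegral_union measurableSet_Ioi hdisj]
  -- first piece
  have h1 : (∫⁻ t in Ioc (0:ℝ) T, ENNReal.ofReal (g t ^ (2 * β))) ≤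
      ENNReal.ofReal (T * R ^ (2 * β)) := by
    calc (∫⁻ t in Ioc (0:ℝ) T, ENNReal.ofReal (g t ^ (2 * β)))
        ≤ ∫⁻ _ in Ioc (0:ℝ) T, ENNReal.ofReal (R ^ (2 * β)) := by
          refine setLIntegral_mono measurable_const fun t ht => ?_
          exact ENNReal.ofReal_le_ofReal
            (pow_le_pow_left₀ (norm_nonneg _) (hbound x hx t ht.1.le) _)
      _ = ENNReal.ofReal (R ^ (2 * β)) * volume (Ioc (0:ℝ) T) := setLIntegral_const _ _
      _ = ENNReal.ofReal (T * R ^ (2 * β)) := by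
          rw [Real.volume_Ioc, sub_zero, ← ENNReal.ofReal_mul (by positivity), mul_comm]
  -- second piece
  set a : ℝ := 2 * δ * β with ha_def
  have hβpos : (0:ℝ) < β := by exact_mod_cast hβ
  have ha : 0 < a := by positivity
  set C : ℝ := μ ^ (2 * β) * η ^ (2 * β) with hC
  have h2 : (∫⁻ t in Ioi T, ENNReal.ofReal (g t ^ (2 * β))) ≤
      ENNReal.ofReal (C / a) := by
    have hpt : ∀ t ∈ Ioi T, g t ^ (2 * β) ≤
        (C * Real.exp (a * T)) * Real.exp (-a * t) := by
      intro t ht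
      have ht' : T ≤ t := (mem_Ioi.mp ht).le
      have hb := htail t ht'
      have hgnn : 0 ≤ g t := norm_nonneg _
      calc g t ^ (2 * β) ≤ (μ * Real.exp (-δ * (t - T)) * η) ^ (2 * β) :=
            pow_le_pow_left₀ hgnn hb _
        _ = C * Real.exp (-δ * (t - T)) ^ (2 * β) := by rw [hC]; ring
        _ = (C * Real.exp (a * T)) * Real.exp (-a * t) := by
            conv_rhs => rw [mul_assoc, ← Real.exp_add]
            rw [← Real.exp_nat_mul]
            congr 1
            push_cast
            rw [ha_def]
            ring
    have hint : IntegrableOn (fun t : ℝ => (C * Real.exp (a * T)) * Real.exp (-a * t))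
        (Ioi T) := (exp_neg_integrableOn_Ioi T ha).const_mul _
    calc (∫⁻ t in Ioi T, ENNReal.ofReal (g t ^ (2 * β)))
        ≤ ∫⁻ t in Ioi T, ENNReal.ofReal ((C * Real.exp (a * T)) * Real.exp (-a * t)) := by
          refine setLIntegral_mono
            (by fun_prop) fun t ht => ENNReal.ofReal_le_ofReal (hpt t ht)
      _ = ENNReal.ofReal (∫ t in Ioi T, (C * Real.exp (a * T)) * Real.exp (-a * t)) := by
          rw [ofReal_integral_eq_lintegral_ofReal hint
            (ae_of_all _ fun t => by positivity)]
      _ = ENNReal.ofReal (C / a) := by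
          rw [integral_const_mul, aux_integral_exp_neg_mul_Ioi ha T]
          congr 1
          rw [Real.exp_neg]
          field_simp
    -- done
  calc (∫⁻ t in Ioc (0:ℝ) T, ENNReal.ofReal (g t ^ (2 * β))) +
        ∫⁻ t in Ioi T, ENNReal.ofReal (g t ^ (2 * β))
      ≤ ENNReal.ofReal (T * R ^ (2 * β)) + ENNReal.ofReal (C / a) := add_le_add h1 h2
    _ = ENNReal.ofReal (T * R ^ (2 * β) + C / a) := by
        rw [← ENNReal.ofReal_add (by positivity) (by positivity)]
    _ = ENNReal.ofReal (sInf S * R ^ (2 * β) +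
          μ ^ (2 * β) * η ^ (2 * β) / (2 * δ * β)) := rfl
end

section
/- Suppose J ∈ C¹(Ω, ℝ) on a compact set Ω ⊆ ℝⁿ, λ > 0, β ∈ ℕ, φ is a flow of f with φ(x,·) ∈ Ω on [0,T], and ∇J(x)ᵀf(x) ≤ −λ‖x‖^{2β}(1 − J(x)) for all x ∈ Ω. Then for any x ∈ Ω and T ≥ 0 with φ(x,t) ∈ Ω for t ∈ [0,T], J(x) ≥ 1 − (1 − J(φ(x,T)))·exp(−λ∫₀^T ‖φ(x,s)‖^{2β} ds). -/
open Set

/-- Gronwall bound along trajectories: if `∇J(x)ᵀf(x) ≤ -λ‖x‖^{2β}(1-J(x))` on a compact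
set `Ω` and the trajectory stays in `Ω` on `[0,T]`, then
`J(x) ≥ 1 - (1 - J(φ(x,T))) exp(-λ ∫₀^T ‖φ(x,s)‖^{2β} ds)`. -/
theorem gronwall_along_trajectory (n : ℕ)
    (Ω : Set (EuclideanSpace ℝ (Fin n))) (hΩ : IsCompact Ω)
    (f : EuclideanSpace ℝ (Fin n) → EuclideanSpace ℝ (Fin n)) (hf : Continuous f)
    (φ : EuclideanSpace ℝ (Fin n) → ℝ → EuclideanSpace ℝ (Fin n))
    (hflow : ∀ x t, HasDerivAt (φ x) (f (φ x t)) t)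
    (hzero : ∀ x, φ x 0 = x)
    (J : EuclideanSpace ℝ (Fin n) → ℝ) (gJ : EuclideanSpace ℝ (Fin n) → EuclideanSpace ℝ (Fin n))
    (hJ : ∀ x ∈ Ω, HasGradientAt J (gJ x) x) (hgJ : ContinuousOn gJ Ω)
    (lam : ℝ) (hlam : 0 < lam) (β : ℕ)
    (hdiss : ∀ x ∈ Ω, (inner ℝ (gJ x) (f x) : ℝ) ≤ -lam * ‖x‖ ^ (2 * β) * (1 - J x))
    (x : EuclideanSpace ℝ (Fin n)) (hx : x ∈ Ω) (T : ℝ) (hT : 0 ≤ T)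
    (hstay : ∀ t ∈ Icc (0 : ℝ) T, φ x t ∈ Ω) :
    J x ≥ 1 - (1 - J (φ x T)) *
      Real.exp (-(lam * ∫ s in (0 : ℝ)..T, ‖φ x s‖ ^ (2 * β))) := by
  set α : ℝ → ℝ := fun s => ‖φ x s‖ ^ (2 * β) with hα
  have hφc : Continuous (φ x) := by
    rw [continuous_iff_continuousAt]; exact fun t => (hflow x t).continuousAt
  have hαc : Continuous α := (hφc.norm.pow _)
  set I : ℝ → ℝ := fun t => ∫ s in (0 : ℝ)..t, α s with hI
  have hId : ∀ t, HasDerivAt I (α t) t := fun t =>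
    (hαc.integral_hasStrictDerivAt 0 t).hasDerivAt
  set E : ℝ → ℝ := fun t => Real.exp (-(lam * I t)) with hE
  have hEd : ∀ t, HasDerivAt E (E t * (-(lam * α t))) t := fun t => by
    simpa [E, mul_comm] using (((hId t).const_mul lam).neg).exp
  set u : ℝ → ℝ := fun t => 1 - J (φ x t) with hu
  have hud : ∀ t ∈ Icc (0 : ℝ) T,
      HasDerivAt u (-(inner ℝ (gJ (φ x t)) (f (φ x t)) : ℝ)) t := by
    intro t ht
    have h1 := (hJ (φ x t) (hstay t ht)).hasFDerivAt.comp_hasDerivAt t (hflow x t)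
    have h2 : HasDerivAt (fun s => J (φ x s))
        ((inner ℝ (gJ (φ x t)) (f (φ x t)) : ℝ)) t := by
      simp [InnerProductSpace.toDual_apply_apply] at h1; exact h1
    simpa [u] using h2.const_sub 1
  set g : ℝ → ℝ := fun t => u t * E t with hg
  have hgd : ∀ t ∈ Icc (0 : ℝ) T, HasDerivAt g
      ((-(inner ℝ (gJ (φ x t)) (f (φ x t)) : ℝ)) * E t + u t * (E t * (-(lam * α t)))) t :=
    fun t ht => (hud t ht).mul (hEd t)
  have hmono : MonotoneOn g (Icc 0 T) := by
    apply monotoneOn_of_deriv_nonneg (convex_Icc 0 T)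
    · exact fun t ht => ((hgd t ht).continuousAt).continuousWithinAt
    · intro t ht
      rw [interior_Icc] at ht
      exact ((hgd t (Ioo_subset_Icc_self ht)).differentiableAt).differentiableWithinAt
    · intro t ht
      rw [interior_Icc] at ht
      have ht' := Ioo_subset_Icc_self ht
      rw [(hgd t ht').deriv]
      have hd := hdiss (φ x t) (hstay t ht')
      have hEpos : 0 < E t := Real.exp_pos _
      have hαt : α t = ‖φ x t‖ ^ (2 * β) := rfl
      have hut : u t = 1 - J (φ x t) := rfl
      have key : (inner ℝ (gJ (φ x t)) (f (φ x t)) : ℝ) ≤ -(lam * α t * u t) := by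
        rw [hαt, hut]; linarith [hd]
      nlinarith [key, hEpos]
  have h01 : g 0 ≤ g T :=
    hmono (left_mem_Icc.mpr hT) (right_mem_Icc.mpr hT) hT
  have hg0 : g 0 = 1 - J x := by
    simp [g, u, E, I, hzero, intervalIntegral.integral_same]
  have hgT : g T = (1 - J (φ x T)) * Real.exp (-(lam * ∫ s in (0 : ℝ)..T, ‖φ x s‖ ^ (2 * β))) := by
    simp [g, u, E, I, α]
  rw [hg0, hgT] at h01
  linarith
end
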